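/- Let R be a ring and J an injective cogenerator of Mod R. For every right R-module M there exists an index set ι such that, setting J' := J^ι (the ι-indexed product) and E' := End_R(J')^op, the evaluation map ε_M : M → Hom_{E'}(Hom_R(M, J'), J') is an isomorphism. -/

import Mathlib

universe u

set_option synthInstance.maxHeartbeats 1000000
set_option maxHeartbeats 1000000

/-- The evaluation map `ε_M(m) : Hom_R(M,J') → J'`, `f ↦ f m`, as a homomorphism of
left `E' = End_R(J')ᵒᵖ`-modules. -/
def evalAt {R : Type*} [Ring R] {J : Type*} [AddCommGroup J] [Module Rᵐᵒᵖ J]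
    {M : Type*} [AddCommGroup M] [Module Rᵐᵒᵖ M] (m : M) :
    (M →ₗ[Rᵐᵒᵖ] J) →ₗ[Module.End Rᵐᵒᵖ J] J where
  toFun f := f m
  map_add' _ _ := rfl
  map_smul' _ _ := rfl

/-- if `J` is an injective cogenerator of right `R`-modules, then for every
right `R`-module `M` there is an index set `ι` such that, with `J' := J^ι` (the product)
and `E' := End_R(J')ᵒᵖ`, the evaluation map `ε_M : M → Hom_{E'}(Hom_R(M,J'), J')` is an
isomorphism (here: bijective). -/
theorem stmt12 {R : Type u} [Ring R] (J : Type u) [AddCommGroup J] [Module Rᵐᵒᵖ J]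
    (hJinj : Module.Injective Rᵐᵒᵖ J)
    (hcogen : ∀ (M : Type u) [AddCommGroup M] [Module Rᵐᵒᵖ M],
      (∀ f : M →ₗ[Rᵐᵒᵖ] J, f = 0) → Subsingleton M)
    (M : Type u) [AddCommGroup M] [Module Rᵐᵒᵖ M] :
    ∃ ι : Type u,
      Function.Bijective (fun m : M => evalAt (R := R) (J := ι → J) m) := by
  classical
  -- Step 0: the canonical map `N → J^{Hom(N,J)}` is injective for every `N`.
  have embed : ∀ (N : Type u) [AddCommGroup N] [Module Rᵐᵒᵖ N],
      Function.Injective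
        (LinearMap.pi (fun f : N →ₗ[Rᵐᵒᵖ] J => f) :
          N →ₗ[Rᵐᵒᵖ] ((N →ₗ[Rᵐᵒᵖ] J) → J)) := by
    intro N _ _
    set c : N →ₗ[Rᵐᵒᵖ] ((N →ₗ[Rᵐᵒᵖ] J) → J) := LinearMap.pi (fun f => f) with hc
    rw [← LinearMap.ker_eq_bot]
    have hsub : Subsingleton (LinearMap.ker c) := by
      apply hcogen
      intro g
      obtain ⟨G, hG⟩ := hJinj.out (LinearMap.ker c).subtype
        (Submodule.injective_subtype _) g
      ext x
      have hx : c x.1 = 0 := x.2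
      have : g x = G x.1 := (hG x).symm
      rw [this]
      have : G x.1 = c x.1 G := rfl
      rw [this, hx]
      rfl
    exact Submodule.eq_bot_of_subsingleton
  -- Step 1: build the injective copresentation.
  set ι₀ := (M →ₗ[Rᵐᵒᵖ] J) with hι₀
  set u₀ : M →ₗ[Rᵐᵒᵖ] (ι₀ → J) := LinearMap.pi (fun f => f) with hu₀def
  have hu₀ : Function.Injective u₀ := embed M
  set C := ((ι₀ → J) ⧸ LinearMap.range u₀) with hC
  set ι₁ := (C →ₗ[Rᵐᵒᵖ] J) with hι₁
  set w : C →ₗ[Rᵐᵒᵖ] (ι₁ → J) := LinearMap.pi (fun f => f) with hwdef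
  have hw : Function.Injective w := embed C
  set v : (ι₀ → J) →ₗ[Rᵐᵒᵖ] (ι₁ → J) := w ∘ₗ (LinearMap.range u₀).mkQ with hvdef
  have hker : ∀ x, v x = 0 → x ∈ LinearMap.range u₀ := by
    intro x h
    have h0 : (LinearMap.range u₀).mkQ x = 0 := by
      apply hw
      rw [map_zero]
      exact h
    rwa [Submodule.mkQ_apply, Submodule.Quotient.mk_eq_zero] at h0
  refine ⟨ι₀ ⊕ ι₁, ?_⟩
  -- Notation: J' = (ι₀ ⊕ ι₁) → J with summand inclusions/projections.
  set e₀ : (ι₀ → J) →ₗ[Rᵐᵒᵖ] ((ι₀ ⊕ ι₁) → J) :=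
    { toFun := fun x => Sum.elim x 0
      map_add' := by intro x y; funext i; cases i <;> simp
      map_smul' := by intro r x; funext i; cases i <;> simp } with he₀def
  set e₁ : (ι₁ → J) →ₗ[Rᵐᵒᵖ] ((ι₀ ⊕ ι₁) → J) :=
    { toFun := fun x => Sum.elim 0 x
      map_add' := by intro x y; funext i; cases i <;> simp
      map_smul' := by intro r x; funext i; cases i <;> simp } with he₁def
  set p₀ : ((ι₀ ⊕ ι₁) → J) →ₗ[Rᵐᵒᵖ] (ι₀ → J) :=
    LinearMap.funLeft Rᵐᵒᵖ J Sum.inl with hp₀def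
  set u : M →ₗ[Rᵐᵒᵖ] ((ι₀ ⊕ ι₁) → J) := e₀ ∘ₗ u₀ with hudef
  have hu : Function.Injective u := by
    intro a b hab
    apply hu₀
    funext i
    exact congrFun hab (Sum.inl i)
  -- Extension property for J'.
  have ext' : ∀ {X Y : Type u} [AddCommGroup X] [AddCommGroup Y]
      [Module Rᵐᵒᵖ X] [Module Rᵐᵒᵖ Y] (f : X →ₗ[Rᵐᵒᵖ] Y),
      Function.Injective f → ∀ (g : X →ₗ[Rᵐᵒᵖ] ((ι₀ ⊕ ι₁) → J)),
      ∃ h : Y →ₗ[Rᵐᵒᵖ] ((ι₀ ⊕ ι₁) → J), ∀ x, h (f x) = g x := by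
    intro X Y _ _ _ _ f hf g
    choose h hh using fun i : ι₀ ⊕ ι₁ =>
      hJinj.out f hf ((LinearMap.proj i : ((ι₀ ⊕ ι₁) → J) →ₗ[Rᵐᵒᵖ] J) ∘ₗ g)
    exact ⟨LinearMap.pi h, fun x => funext fun i => hh i x⟩
  constructor
  · -- injectivity
    intro a b hab
    exact hu (congrArg (fun φ => φ u) hab)
  · -- surjectivity
    intro φ
    have key : ∀ (g : Module.End Rᵐᵒᵖ ((ι₀ ⊕ ι₁) → J)) (f : M →ₗ[Rᵐᵒᵖ] ((ι₀ ⊕ ι₁) → J)),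
        φ (g ∘ₗ f) = g (φ f) := by
      intro g f
      have h1 : g ∘ₗ f = g • f := rfl
      have h2 : φ (g • f) = g • φ f := map_smul φ g f
      rw [h1]
      exact h2
    set x := φ u with hx
    -- x is supported on the ι₀ summand
    have hq : (e₀ ∘ₗ p₀ : Module.End Rᵐᵒᵖ ((ι₀ ⊕ ι₁) → J)) ∘ₗ u = u := by
      ext m i
      cases i <;> simp [hudef, he₀def, hp₀def, LinearMap.funLeft_apply]
    have hxq : e₀ (p₀ x) = x := by
      have := key (e₀ ∘ₗ p₀) u
      rw [hq] at this
      exact this.symm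
    -- p₀ x is killed by v
    have hg1 : (e₁ ∘ₗ v ∘ₗ p₀ : Module.End Rᵐᵒᵖ ((ι₀ ⊕ ι₁) → J)) ∘ₗ u = 0 := by
      ext m
      have hmk : (LinearMap.range u₀).mkQ (u₀ m) = 0 := by
        rw [Submodule.mkQ_apply, Submodule.Quotient.mk_eq_zero]
        exact ⟨m, rfl⟩
      have hv0 : v (u₀ m) = 0 := by
        rw [hvdef, LinearMap.comp_apply, hmk, map_zero]
      have hp : p₀ (u m) = u₀ m := rfl
      simp only [LinearMap.comp_apply, LinearMap.zero_apply, hp, hv0, map_zero]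
    have hvx : v (p₀ x) = 0 := by
      have h2 := key (e₁ ∘ₗ v ∘ₗ p₀) u
      rw [hg1] at h2
      have h3 : e₁ (v (p₀ x)) = 0 := by
        simpa using h2.symm
      funext j
      exact congrFun h3 (Sum.inr j)
    obtain ⟨m, hm⟩ := hker _ hvx
    refine ⟨m, ?_⟩
    have hum : u m = x := by
      have h4 : u m = e₀ (u₀ m) := rfl
      rw [h4, hm, hxq]
    -- φ = evalAt m
    refine LinearMap.ext fun f => ?_
    obtain ⟨h, hh⟩ := ext' u hu f
    have hcomp : h ∘ₗ u = f := LinearMap.ext hh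
    have hkey := key h u
    rw [hcomp] at hkey
    show f m = φ f
    rw [hkey, ← hx, ← hum]
    exact (hh m).symm
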